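/- Isolation Lemma: Let n, N ≥ 1 and let 𝓕 be a nonempty family of subsets of {1,…,n}. If a weight assignment w : {1,…,n} → {1,…,N} is chosen uniformly at random, then with probability at least 1 − n/N, there is a unique set F ∈ 𝓕 of minimum weight, where the weight of F is Σ_{i∈F} w(i). -/

import Mathlib

open Finset

open scoped Classical in
private lemma sing_eq {n N : ℕ} (𝓕 : Finset (Finset (Fin n))) (i : Fin n)
    (w : Fin n → Fin N) (F G : Finset (Fin n)) (hF : F ∈ 𝓕) (hG : G ∈ 𝓕)
    (hiF : i ∈ F) (hiG : i ∉ G)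
    (hFmin : ∀ H ∈ 𝓕, ∑ j ∈ F, ((w j : ℕ) + 1) ≤ ∑ j ∈ H, ((w j : ℕ) + 1))
    (hGmin : ∀ H ∈ 𝓕, ∑ j ∈ G, ((w j : ℕ) + 1) ≤ ∑ j ∈ H, ((w j : ℕ) + 1))
    (hp : (𝓕.filter (fun H => i ∈ H)).Nonempty)
    (hm : (𝓕.filter (fun H => i ∉ H)).Nonempty) :
    (𝓕.filter (fun H => i ∈ H)).inf' hp (fun H => ∑ j ∈ H.erase i, ((w j : ℕ) + 1))
        + ((w i : ℕ) + 1)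
      = (𝓕.filter (fun H => i ∉ H)).inf' hm (fun H => ∑ j ∈ H, ((w j : ℕ) + 1)) := by
  have hα : (𝓕.filter (fun H => i ∉ H)).inf' hm (fun H => ∑ j ∈ H, ((w j : ℕ) + 1))
      = ∑ j ∈ G, ((w j : ℕ) + 1) := by
    refine le_antisymm (inf'_le _ (mem_filter.2 ⟨hG, hiG⟩)) ?_
    obtain ⟨G₀, hG₀, hEq⟩ := exists_mem_eq_inf' hm (fun H => ∑ j ∈ H, ((w j : ℕ) + 1))
    rw [hEq]
    exact hGmin G₀ (mem_filter.1 hG₀).1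
  have hβ : (𝓕.filter (fun H => i ∈ H)).inf' hp
        (fun H => ∑ j ∈ H.erase i, ((w j : ℕ) + 1))
      = ∑ j ∈ F.erase i, ((w j : ℕ) + 1) := by
    refine le_antisymm (inf'_le _ (mem_filter.2 ⟨hF, hiF⟩)) ?_
    obtain ⟨F₀, hF₀, hEq⟩ := exists_mem_eq_inf' hp
      (fun H => ∑ j ∈ H.erase i, ((w j : ℕ) + 1))
    rw [hEq]
    have h1 : ∑ j ∈ F.erase i, ((w j : ℕ) + 1) + ((w i : ℕ) + 1)
        = ∑ j ∈ F, ((w j : ℕ) + 1) := sum_erase_add _ _ hiF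
    have h2 : ∑ j ∈ F₀.erase i, ((w j : ℕ) + 1) + ((w i : ℕ) + 1)
        = ∑ j ∈ F₀, ((w j : ℕ) + 1) :=
      sum_erase_add _ _ (mem_filter.1 hF₀).2
    have h3 := hFmin F₀ (mem_filter.1 hF₀).1
    omega
  have hFG : ∑ j ∈ F, ((w j : ℕ) + 1) = ∑ j ∈ G, ((w j : ℕ) + 1) :=
    le_antisymm (hFmin G hG) (hGmin F hF)
  have h1 : ∑ j ∈ F.erase i, ((w j : ℕ) + 1) + ((w i : ℕ) + 1)
      = ∑ j ∈ F, ((w j : ℕ) + 1) := sum_erase_add _ _ hiF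
  omega

open scoped Classical in
private lemma key_inj {n N : ℕ} (𝓕 : Finset (Finset (Fin n))) (i : Fin n)
    (w w' : Fin n → Fin N) (hww' : ∀ j, j ≠ i → w j = w' j)
    (h : ∃ F ∈ 𝓕, ∃ G ∈ 𝓕, i ∈ F ∧ i ∉ G ∧
      (∀ H ∈ 𝓕, ∑ j ∈ F, ((w j : ℕ) + 1) ≤ ∑ j ∈ H, ((w j : ℕ) + 1)) ∧
      (∀ H ∈ 𝓕, ∑ j ∈ G, ((w j : ℕ) + 1) ≤ ∑ j ∈ H, ((w j : ℕ) + 1)))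
    (h' : ∃ F ∈ 𝓕, ∃ G ∈ 𝓕, i ∈ F ∧ i ∉ G ∧
      (∀ H ∈ 𝓕, ∑ j ∈ F, ((w' j : ℕ) + 1) ≤ ∑ j ∈ H, ((w' j : ℕ) + 1)) ∧
      (∀ H ∈ 𝓕, ∑ j ∈ G, ((w' j : ℕ) + 1) ≤ ∑ j ∈ H, ((w' j : ℕ) + 1))) :
    w i = w' i := by
  obtain ⟨F, hF, G, hG, hiF, hiG, hFmin, hGmin⟩ := h
  obtain ⟨F', hF', G', hG', hiF', hiG', hFmin', hGmin'⟩ := h'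
  have hp : (𝓕.filter (fun H => i ∈ H)).Nonempty := ⟨F, mem_filter.2 ⟨hF, hiF⟩⟩
  have hm : (𝓕.filter (fun H => i ∉ H)).Nonempty := ⟨G, mem_filter.2 ⟨hG, hiG⟩⟩
  have e1 := sing_eq 𝓕 i w F G hF hG hiF hiG hFmin hGmin hp hm
  have e2 := sing_eq 𝓕 i w' F' G' hF' hG' hiF' hiG' hFmin' hGmin' hp hm
  have eα : (𝓕.filter (fun H => i ∉ H)).inf' hm (fun H => ∑ j ∈ H, ((w j : ℕ) + 1))
      = (𝓕.filter (fun H => i ∉ H)).inf' hm (fun H => ∑ j ∈ H, ((w' j : ℕ) + 1)) := by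
    refine inf'_congr hm rfl fun H hH => ?_
    refine Finset.sum_congr rfl fun j hj => ?_
    have : j ≠ i := fun hji => (mem_filter.1 hH).2 (hji ▸ hj)
    rw [hww' j this]
  have eβ : (𝓕.filter (fun H => i ∈ H)).inf' hp
        (fun H => ∑ j ∈ H.erase i, ((w j : ℕ) + 1))
      = (𝓕.filter (fun H => i ∈ H)).inf' hp
        (fun H => ∑ j ∈ H.erase i, ((w' j : ℕ) + 1)) := by
    refine inf'_congr hp rfl fun H hH => ?_
    refine Finset.sum_congr rfl fun j hj => ?_
    rw [hww' j (Finset.ne_of_mem_erase hj)]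
  have : (w i : ℕ) = (w' i : ℕ) := by omega
  exact Fin.ext this

private lemma card_fix {n N : ℕ} (i : Fin n) (z : Fin N) :
    (Finset.univ.filter (fun v : Fin n → Fin N => v i = z)).card = N ^ (n - 1) := by
  classical
  have hcard : (Finset.univ.filter (fun v : Fin n → Fin N => v i = z)).card
      = (Finset.univ : Finset ({j : Fin n // j ≠ i} → Fin N)).card := by
    refine Finset.card_bij' (fun v _ => fun j => v j.1)
      (fun g _ => fun j => if h : j = i then z else g ⟨j, h⟩) ?_ ?_ ?_ ?_
    · intro v hv; exact Finset.mem_univ _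
    · intro g hg
      simp only [Finset.mem_filter, Finset.mem_univ, true_and]
      simp
    · intro v hv
      funext j
      by_cases h : j = i
      · subst h; simp [(Finset.mem_filter.1 hv).2]
      · simp [h]
    · intro g hg
      funext j
      simp [j.2]
  rw [hcard]
  have h1 : Fintype.card {j : Fin n // j ≠ i} = n - 1 := by
    rw [Fintype.card_subtype_compl, Fintype.card_subtype_eq]
    simp
  rw [Finset.card_univ, Fintype.card_fun, h1, Fintype.card_fin]

open scoped Classical in
/-- Isolation Lemma: for a nonempty family `𝓕` of subsets of `{1,…,n}` and a uniformly
random weight assignment `w : {1,…,n} → {1,…,N}`, with probability at least `1 - n/N`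
the minimum-weight set of `𝓕` is unique. -/
theorem stmt_14 {n N : ℕ} (hn : 1 ≤ n) (hN : 1 ≤ N)
    (𝓕 : Finset (Finset (Fin n))) (h𝓕 : 𝓕.Nonempty) :
    (1 : ℝ) - (n : ℝ) / N ≤
      ((Finset.univ.filter (fun w : Fin n → Fin N =>
          ∃! F : Finset (Fin n), F ∈ 𝓕 ∧
            ∀ G ∈ 𝓕, ∑ i ∈ F, ((w i : ℕ) + 1) ≤ ∑ i ∈ G, ((w i : ℕ) + 1))).card : ℝ)
        / (N ^ n : ℕ) := by
  set P : (Fin n → Fin N) → Prop := fun w =>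
    ∃! F : Finset (Fin n), F ∈ 𝓕 ∧
      ∀ G ∈ 𝓕, ∑ i ∈ F, ((w i : ℕ) + 1) ≤ ∑ i ∈ G, ((w i : ℕ) + 1) with hP
  set Sing : Fin n → (Fin n → Fin N) → Prop := fun i w =>
    ∃ F ∈ 𝓕, ∃ G ∈ 𝓕, i ∈ F ∧ i ∉ G ∧
      (∀ H ∈ 𝓕, ∑ j ∈ F, ((w j : ℕ) + 1) ≤ ∑ j ∈ H, ((w j : ℕ) + 1)) ∧
      (∀ H ∈ 𝓕, ∑ j ∈ G, ((w j : ℕ) + 1) ≤ ∑ j ∈ H, ((w j : ℕ) + 1)) with hSing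
  -- the bad set is covered by the singular sets
  have hsub : (Finset.univ.filter (fun w => ¬ P w)) ⊆
      Finset.univ.biUnion (fun i : Fin n => Finset.univ.filter (Sing i)) := by
    intro w hw
    have hbad : ¬ P w := (Finset.mem_filter.1 hw).2
    obtain ⟨F₀, hF₀, hmin⟩ := Finset.exists_min_image 𝓕
      (fun F => ∑ i ∈ F, ((w i : ℕ) + 1)) h𝓕
    have : ¬ ∀ y, (y ∈ 𝓕 ∧ ∀ G ∈ 𝓕,
        ∑ i ∈ y, ((w i : ℕ) + 1) ≤ ∑ i ∈ G, ((w i : ℕ) + 1)) → y = F₀ := by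
      intro hall
      exact hbad ⟨F₀, ⟨hF₀, hmin⟩, hall⟩
    push_neg at this
    obtain ⟨G₀, ⟨hG₀, hG₀min⟩, hne⟩ := this
    have hns : ¬ (G₀ ⊆ F₀) ∨ ¬ (F₀ ⊆ G₀) := by
      by_contra hc
      push_neg at hc
      exact hne (Finset.Subset.antisymm hc.1 hc.2)
    rcases hns with hns | hns
    · obtain ⟨i, hiG, hiF⟩ := Finset.not_subset.1 hns
      refine Finset.mem_biUnion.2 ⟨i, Finset.mem_univ _, Finset.mem_filter.2
        ⟨Finset.mem_univ _, ⟨G₀, hG₀, F₀, hF₀, hiG, hiF, hG₀min, hmin⟩⟩⟩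
    · obtain ⟨i, hiF, hiG⟩ := Finset.not_subset.1 hns
      refine Finset.mem_biUnion.2 ⟨i, Finset.mem_univ _, Finset.mem_filter.2
        ⟨Finset.mem_univ _, ⟨F₀, hF₀, G₀, hG₀, hiF, hiG, hmin, hG₀min⟩⟩⟩
  -- each singular set has few elements
  have hAi : ∀ i : Fin n, (Finset.univ.filter (Sing i)).card ≤ N ^ (n - 1) := by
    intro i
    set z : Fin N := ⟨0, hN⟩ with hz
    have := Finset.card_le_card_of_injOn (f := fun w => Function.update w i z)
      (s := Finset.univ.filter (Sing i))
      (t := Finset.univ.filter (fun v : Fin n → Fin N => v i = z))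
      (fun w _ => Finset.mem_filter.2 ⟨Finset.mem_univ _, Function.update_self i z w⟩)
      ?_
    · rwa [card_fix i z] at this
    · intro w hw w' hw' heq
      have hoff : ∀ j, j ≠ i → w j = w' j := by
        intro j hj
        have := congrFun heq j
        simpa [Function.update_of_ne hj] using this
      have := key_inj 𝓕 i w w' hoff
        (Finset.mem_filter.1 (Finset.mem_coe.1 hw)).2
        (Finset.mem_filter.1 (Finset.mem_coe.1 hw')).2
      funext j
      by_cases hj : j = i
      · subst hj; exact this
      · exact hoff j hj
  -- union bound
  have hbadcard : (Finset.univ.filter (fun w => ¬ P w)).card ≤ n * N ^ (n - 1) := by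
    calc (Finset.univ.filter (fun w => ¬ P w)).card
        ≤ (Finset.univ.biUnion (fun i : Fin n =>
            Finset.univ.filter (Sing i))).card := Finset.card_le_card hsub
      _ ≤ ∑ i : Fin n, (Finset.univ.filter (Sing i)).card :=
          Finset.card_biUnion_le
      _ ≤ ∑ _i : Fin n, N ^ (n - 1) := Finset.sum_le_sum (fun i _ => hAi i)
      _ = n * N ^ (n - 1) := by simp [Finset.sum_const, mul_comm]
  have htotal : (Finset.univ.filter (fun w => P w)).card
      + (Finset.univ.filter (fun w => ¬ P w)).card = N ^ n := by
    rw [Finset.card_filter_add_card_filter_not, Finset.card_univ]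
    simp [Fintype.card_fun]
  -- arithmetic
  have hNpos : (0 : ℝ) < (N : ℝ) := by exact_mod_cast hN
  have hpow : (0 : ℝ) < ((N ^ n : ℕ) : ℝ) := by positivity
  rw [le_div_iff₀ hpow]
  have hkey : ((Finset.univ.filter (fun w => P w)).card : ℝ)
      ≥ ((N ^ n : ℕ) : ℝ) - (n : ℝ) * (N : ℝ) ^ (n - 1) := by
    have h1 : ((Finset.univ.filter (fun w => P w)).card : ℝ)
        = ((N ^ n : ℕ) : ℝ) - ((Finset.univ.filter (fun w => ¬ P w)).card : ℝ) := by
      have := htotal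
      push_cast [← this]
      ring
    have h2 : ((Finset.univ.filter (fun w => ¬ P w)).card : ℝ)
        ≤ (n : ℝ) * (N : ℝ) ^ (n - 1) := by exact_mod_cast hbadcard
    linarith
  have hexp : ((N ^ n : ℕ) : ℝ) = (N : ℝ) * (N : ℝ) ^ (n - 1) := by
    push_cast
    rw [← pow_succ']
    congr 1
    omega
  have : (1 - (n : ℝ) / N) * ((N ^ n : ℕ) : ℝ)
      = ((N ^ n : ℕ) : ℝ) - (n : ℝ) * (N : ℝ) ^ (n - 1) := by
    rw [hexp]
    field_simp
  rw [this]
  exact hkey
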